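/- Let θ ∈ ℝⁿ satisfy 0 < θ_min ≤ ‖θ‖ ≤ θ_max, and suppose the gradient of g at a*(θ) is a positive multiple of θ. Assume that on the closed ball B(a*(θ), m') = {y : ‖y − a*(θ)‖ ≤ m'} the bounds ∇_min ≤ ‖∇g(y)‖ ≤ ∇_max and λ^Δ_min·I ⪯ ∇²g(y) ⪯ λ^Δ_max·I hold, where 0 < ∇_min ≤ ∇_max and 0 < λ^Δ_min ≤ λ^Δ_max, and set φ_g = ∇_min/λ^Δ_max. Then for every x ∈ ℝⁿ with g(x) = 0 and ‖x − a*(θ)‖ ≤ m', one has (θ_min λ^Δ_min/(2∇_max))·‖a*(θ) − x‖² ≤ ⟨θ, a*(θ)⟩ − ⟨θ, x⟩ ≤ (θ_max/(2φ_g))·‖a*(θ) − x‖². -/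

import Mathlib

open RealInnerProductSpace
open Set

lemma second_order_mvt (f f' f'' : ℝ → ℝ)
    (hf : ∀ t, HasDerivAt f (f' t) t) (hf' : ∀ t, HasDerivAt f' (f'' t) t) :
    ∃ c ∈ Ioo (0:ℝ) 1, f 1 - f 0 - f' 0 = f'' c / 2 := by
  set K : ℝ := f 1 - f 0 - f' 0 with hK
  set φ : ℝ → ℝ := fun t => f t - f 0 - t * f' 0 - t ^ 2 * K with hφ
  set φ' : ℝ → ℝ := fun t => f' t - f' 0 - 2 * t * K with hφ'
  have hdφ : ∀ t, HasDerivAt φ (φ' t) t := by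
    intro t
    have h1 : HasDerivAt (fun t : ℝ => t * f' 0) (f' 0) t := by
      simpa using (hasDerivAt_id t).mul_const (f' 0)
    have h2 : HasDerivAt (fun t : ℝ => t ^ 2 * K) (2 * t * K) t := by
      have := ((hasDerivAt_pow 2 t).mul_const K)
      simpa [mul_comm, mul_assoc, mul_left_comm] using this
    exact (((hf t).sub_const (f 0)).sub h1).sub h2
  have hφ0 : φ 0 = 0 := by simp [φ]
  have hφ1 : φ 1 = 0 := by simp only [φ, hK]; ring
  have hcont : ContinuousOn φ (Icc 0 1) :=
    (fun t _ => ((hdφ t).continuousAt).continuousWithinAt)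
  obtain ⟨a, ha, hφ'a⟩ := exists_hasDerivAt_eq_zero (by norm_num : (0:ℝ) < 1) hcont
    (by rw [hφ0, hφ1]) (fun t _ => hdφ t)
  have hdφ' : ∀ t, HasDerivAt φ' (f'' t - 2 * K) t := by
    intro t
    have h2 : HasDerivAt (fun t : ℝ => 2 * t * K) (2 * K) t := by
      have := ((hasDerivAt_id t).const_mul (2:ℝ)).mul_const K
      simpa [mul_comm, mul_assoc, mul_left_comm] using this
    exact (((hf' t).sub_const (f' 0)).sub h2)
  have hφ'0 : φ' 0 = 0 := by simp [φ']
  have hcont' : ContinuousOn φ' (Icc 0 a) :=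
    (fun t _ => ((hdφ' t).continuousAt).continuousWithinAt)
  obtain ⟨c, hc, hcc⟩ := exists_hasDerivAt_eq_zero ha.1 hcont'
    (by rw [hφ'0, hφ'a]) (fun t _ => hdφ' t)
  refine ⟨c, ⟨hc.1, hc.2.trans ha.2⟩, ?_⟩
  have : f'' c = 2 * K := by linarith [hcc]
  rw [this]; ring

set_option maxHeartbeats 1600000 in
/-- quadratic regret sandwich. For `θ` with `0 < θmin ≤ ‖θ‖ ≤ θmax`, a
reward-maximizing action `a*(θ)` on the boundary of `𝒜 = {g ≤ 0}` whose gradient is a positive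
multiple of `θ`, and gradient/Hessian bounds on the ball `B(a*(θ), m')`, every boundary point
`x` of `𝒜` in that ball satisfies
`(θmin lamΔmin/(2∇max))·‖a*(θ) − x‖² ≤ ⟪θ, a*(θ)⟫ − ⟪θ, x⟫ ≤ (θmax/(2φ_g))·‖a*(θ) − x‖²`. -/
theorem regret_quadratic_sandwich {n : ℕ}
    (g : EuclideanSpace ℝ (Fin n) → ℝ) (hg : ContDiff ℝ 3 g)
    (κ : ℝ) (hκ : 0 < κ) (hsc : StrongConvexOn Set.univ κ g)
    (hcompact : IsCompact {x : EuclideanSpace ℝ (Fin n) | g x ≤ 0})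
    (θ : EuclideanSpace ℝ (Fin n)) (θmin θmax : ℝ)
    (hθmin : 0 < θmin) (hθlb : θmin ≤ ‖θ‖) (hθub : ‖θ‖ ≤ θmax)
    (astar : EuclideanSpace ℝ (Fin n))
    (hmem : g astar ≤ 0) (hmax : ∀ b, g b ≤ 0 → ⟪θ, b⟫ ≤ ⟪θ, astar⟫)
    (hbdry : g astar = 0)
    (ω : ℝ) (hω : 0 < ω) (hgrad : gradient g astar = ω • θ)
    (m' gradmin gradmax lamΔmin lamΔmax : ℝ)
    (hm' : 0 < m') (hgradmin : 0 < gradmin) (hgradle : gradmin ≤ gradmax)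
    (hlamΔmin : 0 < lamΔmin) (hlamΔle : lamΔmin ≤ lamΔmax)
    (hgradbnd : ∀ y : EuclideanSpace ℝ (Fin n), ‖y - astar‖ ≤ m' →
      gradmin ≤ ‖gradient g y‖ ∧ ‖gradient g y‖ ≤ gradmax)
    (hHess : ∀ y : EuclideanSpace ℝ (Fin n), ‖y - astar‖ ≤ m' →
      ∀ v : EuclideanSpace ℝ (Fin n),
        lamΔmin * ‖v‖ ^ 2 ≤ ⟪fderiv ℝ (gradient g) y v, v⟫ ∧
        ⟪fderiv ℝ (gradient g) y v, v⟫ ≤ lamΔmax * ‖v‖ ^ 2)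
    (φg : ℝ) (hφg : φg = gradmin / lamΔmax)
    (x : EuclideanSpace ℝ (Fin n)) (hx : g x = 0) (hxball : ‖x - astar‖ ≤ m') :
    θmin * lamΔmin / (2 * gradmax) * ‖astar - x‖ ^ 2 ≤ ⟪θ, astar⟫ - ⟪θ, x⟫ ∧
    ⟪θ, astar⟫ - ⟪θ, x⟫ ≤ θmax / (2 * φg) * ‖astar - x‖ ^ 2 := by
  set d : EuclideanSpace ℝ (Fin n) := x - astar with hd
  set y : ℝ → EuclideanSpace ℝ (Fin n) := fun t => astar + t • d with hy
  -- differentiability facts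
  have hgdiff : Differentiable ℝ g := hg.differentiable (by norm_num)
  have hGc : ContDiff ℝ 2 (gradient g) := by
    have h1 : ContDiff ℝ 2 (fderiv ℝ g) := hg.fderiv_right (by norm_num)
    exact ((InnerProductSpace.toDual ℝ (EuclideanSpace ℝ (Fin n))).symm.contDiff).comp h1
  have hGdiff : Differentiable ℝ (gradient g) := hGc.differentiable (by norm_num)
  have hyd : ∀ t : ℝ, HasDerivAt y d t := by
    intro t
    simpa only [id, one_smul] using ((hasDerivAt_id t).smul_const d).const_add astar
  set f : ℝ → ℝ := fun t => g (y t) with hf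
  set f' : ℝ → ℝ := fun t => ⟪gradient g (y t), d⟫ with hf'
  set f'' : ℝ → ℝ := fun t => ⟪fderiv ℝ (gradient g) (y t) d, d⟫ with hf''
  have hdf : ∀ t, HasDerivAt f (f' t) t := by
    intro t
    have h1 := ((hgdiff (y t)).hasGradientAt).hasFDerivAt.comp_hasDerivAt t (hyd t)
    simpa [f, f', Function.comp_def] using h1
  have hdf' : ∀ t, HasDerivAt f' (f'' t) t := by
    intro t
    have h1 : HasDerivAt (fun t => gradient g (y t)) (fderiv ℝ (gradient g) (y t) d) t :=
      ((hGdiff (y t)).hasFDerivAt).comp_hasDerivAt t (hyd t)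
    have h2 := h1.inner ℝ (hasDerivAt_const t d)
    simpa [f'] using h2
  obtain ⟨c, hc, hkey⟩ := second_order_mvt f f' f'' hdf hdf'
  -- evaluate endpoints
  have hy0 : y 0 = astar := by simp [y]
  have hy1 : y 1 = x := by simp [y, d]
  have hf1 : f 1 = 0 := by rw [hf]; simp only [hy1]; exact hx
  have hf0 : f 0 = 0 := by rw [hf]; simp only [hy0]; exact hbdry
  have hf'0 : f' 0 = ω * (⟪θ, x⟫ - ⟪θ, astar⟫) := by
    rw [hf']; simp only [hy0, hgrad]
    rw [real_inner_smul_left, hd, inner_sub_right]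
  -- Hessian bound at y c
  have hycball : ‖y c - astar‖ ≤ m' := by
    have : y c - astar = c • d := by simp [y]
    rw [this, norm_smul, Real.norm_eq_abs, abs_of_pos hc.1]
    calc c * ‖d‖ ≤ 1 * ‖d‖ := by
          apply mul_le_mul_of_nonneg_right hc.2.le (norm_nonneg d)
      _ = ‖d‖ := one_mul _
      _ ≤ m' := hxball
  obtain ⟨hF1, hF2⟩ := hHess (y c) hycball d
  -- gradient norm bound at astar
  have hab : ‖astar - astar‖ ≤ m' := by simp [hm'.le]
  obtain ⟨hg1, hg2⟩ := hgradbnd astar hab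
  rw [hgrad, norm_smul, Real.norm_eq_abs, abs_of_pos hω] at hg1 hg2
  set S : ℝ := ⟪θ, astar⟫ - ⟪θ, x⟫ with hS
  set N : ℝ := ‖astar - x‖ with hN
  have hNd : ‖d‖ = N := by rw [hd, hN, norm_sub_rev]
  rw [hNd] at hF1 hF2
  have key : 2 * ω * S = f'' c := by
    rw [hf1, hf0, hf'0] at hkey
    have : -(ω * (⟪θ, x⟫ - ⟪θ, astar⟫)) = f'' c / 2 := by linarith
    rw [hS]; linarith
  have hθpos : 0 < ‖θ‖ := lt_of_lt_of_le hθmin hθlb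
  have hN2 : (0:ℝ) ≤ N ^ 2 := sq_nonneg N
  constructor
  · -- lower bound
    rw [div_mul_eq_mul_div, div_le_iff₀ (by linarith : (0:ℝ) < 2 * gradmax)]
    have chain : ω * (θmin * lamΔmin * N ^ 2) ≤ ω * (S * (2 * gradmax)) := by
      have h1 : gradmax * (lamΔmin * N ^ 2) ≤ gradmax * f'' c :=
        mul_le_mul_of_nonneg_left hF1 (by linarith)
      have h2 : ω * θmin * (lamΔmin * N ^ 2) ≤ ω * ‖θ‖ * (lamΔmin * N ^ 2) := by
        apply mul_le_mul_of_nonneg_right _ (by positivity)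
        exact mul_le_mul_of_nonneg_left hθlb hω.le
      have h3 : ω * ‖θ‖ * (lamΔmin * N ^ 2) ≤ gradmax * (lamΔmin * N ^ 2) :=
        mul_le_mul_of_nonneg_right hg2 (by positivity)
      have h4 : gradmax * (2 * ω * S) = gradmax * f'' c := by rw [key]
      nlinarith [h1, h2, h3, h4]
    exact le_of_mul_le_mul_left chain hω
  · -- upper bound
    have hφgval : θmax / (2 * φg) = θmax * lamΔmax / (2 * gradmin) := by
      rw [hφg]; field_simp
    rw [hφgval, div_mul_eq_mul_div, le_div_iff₀ (by linarith : (0:ℝ) < 2 * gradmin)]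
    have chain : ω * (S * (2 * gradmin)) ≤ ω * (θmax * lamΔmax * N ^ 2) := by
      have h1 : gradmin * f'' c ≤ gradmin * (lamΔmax * N ^ 2) :=
        mul_le_mul_of_nonneg_left hF2 hgradmin.le
      have h2 : gradmin * (lamΔmax * N ^ 2) ≤ ω * ‖θ‖ * (lamΔmax * N ^ 2) :=
        mul_le_mul_of_nonneg_right hg1 (mul_nonneg (by linarith) (sq_nonneg N))
      have h3 : ω * ‖θ‖ * (lamΔmax * N ^ 2) ≤ ω * θmax * (lamΔmax * N ^ 2) := by
        apply mul_le_mul_of_nonneg_right _ (mul_nonneg (by linarith) (sq_nonneg N))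
        exact mul_le_mul_of_nonneg_left hθub hω.le
      have h4 : gradmin * (2 * ω * S) = gradmin * f'' c := by rw [key]
      nlinarith [h1, h2, h3, h4]
    exact le_of_mul_le_mul_left chain hω
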